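/- Let R be a commutative ring and F ∈ R[x,y]. If F is a coordinate of R[x,y] and N ∈ R[x,y] is nilpotent, then F + N is also a coordinate of R[x,y]. -/

import Mathlib

open MvPolynomial

section Aux

variable {R : Type*} [CommRing R]

/-- Coefficients of a nilpotent multivariate polynomial are nilpotent. -/
private lemma aux_coeff_isNilpotent : ∀ (n : ℕ) (M : MvPolynomial (Fin n) R),
    IsNilpotent M → ∀ m : Fin n →₀ ℕ, IsNilpotent (MvPolynomial.coeff m M)
  | 0, M, hM, m => by
      have hm : m = 0 := Subsingleton.elim _ _
      have h := hM.map (MvPolynomial.constantCoeff : MvPolynomial (Fin 0) R →+* R)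
      subst hm
      simpa [MvPolynomial.constantCoeff_eq] using h
  | (n + 1), M, hM, m => by
      have h1 : IsNilpotent (finSuccEquiv R n M) :=
        hM.map (finSuccEquiv R n)
      rw [Polynomial.isNilpotent_iff] at h1
      have h2 := aux_coeff_isNilpotent n _ (h1 (m 0)) (Finsupp.tail m)
      rwa [finSuccEquiv_coeff_coeff, Finsupp.cons_tail] at h2

private lemma aux_shift_sub_mem (t : MvPolynomial (Fin 2) R)
    (φ : MvPolynomial (Fin 2) R →ₐ[R] MvPolynomial (Fin 2) R)
    (hφ : φ = MvPolynomial.aeval ![MvPolynomial.X 0, MvPolynomial.X 1 + t])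
    (P : MvPolynomial (Fin 2) R) :
    φ P - P ∈ Ideal.span {t} := by
  have h0 : φ (MvPolynomial.X 0) = MvPolynomial.X 0 := by rw [hφ]; simp
  have h1 : φ (MvPolynomial.X 1) = MvPolynomial.X 1 + t := by rw [hφ]; simp
  clear hφ
  induction P using MvPolynomial.induction_on with
  | C a =>
      have hc : φ (MvPolynomial.C a) = MvPolynomial.C a := by
        simpa using φ.commutes a
      simp [hc]
  | add p q hp hq =>
      have := Ideal.add_mem _ hp hq
      convert this using 1
      simp only [map_add]
      ring
  | mul_X p i hp =>
      have hX : φ (MvPolynomial.X i) - MvPolynomial.X i ∈ Ideal.span {t} := by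
        fin_cases i <;> simp only [Fin.zero_eta, Fin.mk_one, Fin.isValue, h0, h1]
        · simp
        · simpa using Ideal.mem_span_singleton_self t
      have key : φ (p * MvPolynomial.X i) - p * MvPolynomial.X i =
          φ p * (φ (MvPolynomial.X i) - MvPolynomial.X i)
          + (φ p - p) * MvPolynomial.X i := by
        simp only [map_mul]; ring
      rw [key]
      exact Ideal.add_mem _ (Ideal.mul_mem_left _ _ hX) (Ideal.mul_mem_right _ _ hp)

/-- If an algebra endomorphism moves every element by an element of `I = J.map C`,
then it moves elements of `I` by elements of `I ^ 2`. -/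
private lemma aux_sq (J : Ideal R)
    (θ : MvPolynomial (Fin 2) R →ₐ[R] MvPolynomial (Fin 2) R)
    (hθ : ∀ z, θ z - z ∈ J.map (MvPolynomial.C : R →+* MvPolynomial (Fin 2) R))
    (x : MvPolynomial (Fin 2) R)
    (hx : x ∈ J.map (MvPolynomial.C : R →+* MvPolynomial (Fin 2) R)) :
    θ x - x ∈ (J.map (MvPolynomial.C : R →+* MvPolynomial (Fin 2) R)) ^ 2 := by
  set I := J.map (MvPolynomial.C : R →+* MvPolynomial (Fin 2) R) with hI
  have hx' : x ∈ Submodule.span (MvPolynomial (Fin 2) R)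
      ((MvPolynomial.C : R →+* MvPolynomial (Fin 2) R) '' J) := hx
  refine Submodule.span_induction ?_ ?_ ?_ ?_ hx'
  · rintro _ ⟨c, hc, rfl⟩
    have : θ (MvPolynomial.C c) = MvPolynomial.C c := by
      simpa using θ.commutes c
    simp [this]
  · simp
  · intro a b _ _ ha hb
    have := Ideal.add_mem _ ha hb
    convert this using 1
    simp only [map_add]; ring
  · intro a b hbI hb
    have h1 : θ (a • b) - a • b = θ a * (θ b - b) + (θ a - a) * b := by
      simp only [smul_eq_mul, map_mul]; ring
    rw [smul_eq_mul] at h1 ⊢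
    rw [h1]
    refine Ideal.add_mem _ (Ideal.mul_mem_left _ _ hb) ?_
    have h2 : θ a - a ∈ I := hθ a
    have h3 : b ∈ I := hbI
    rw [sq]
    exact Ideal.mul_mem_mul h2 h3


private lemma aux_mem_map_C {J : Ideal R} (p : MvPolynomial (Fin 2) R)
    (h : ∀ m, MvPolynomial.coeff m p ∈ J) :
    p ∈ J.map (MvPolynomial.C : R →+* MvPolynomial (Fin 2) R) := by
  rw [← MvPolynomial.support_sum_monomial_coeff p]
  apply Ideal.sum_mem
  intro m _
  rw [MvPolynomial.monomial_eq]
  exact Ideal.mul_mem_right _ _ (Ideal.mem_map_of_mem _ (h m))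

private lemma aux_key : ∀ (k : ℕ) (J : Ideal R), J ^ k = ⊥ →
    ∀ M ∈ J.map (MvPolynomial.C : R →+* MvPolynomial (Fin 2) R),
    ∃ τ : MvPolynomial (Fin 2) R ≃ₐ[R] MvPolynomial (Fin 2) R,
      τ (MvPolynomial.X 0) = MvPolynomial.X 0 ∧
      τ (MvPolynomial.X 1) = MvPolynomial.X 1 + M := by
  intro k
  induction k using Nat.strong_induction_on with
  | _ k ih =>
  match k with
  | 0 =>
      intro J hJ M hM
      have h1 : (1 : R) = 0 := by
        have : (1 : R) ∈ (⊥ : Ideal R) := by rw [← hJ]; simp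
        simpa using this
      haveI : Subsingleton R := subsingleton_of_zero_eq_one h1.symm
      haveI : Subsingleton (MvPolynomial (Fin 2) R) :=
        ⟨fun p q => MvPolynomial.ext _ _ fun m => Subsingleton.elim _ _⟩
      exact ⟨AlgEquiv.refl, Subsingleton.elim _ _, Subsingleton.elim _ _⟩
  | 1 =>
      intro J hJ M hM
      rw [pow_one] at hJ
      subst hJ
      rw [Ideal.map_bot] at hM
      have hM0 : M = 0 := by simpa using hM
      subst hM0
      exact ⟨AlgEquiv.refl, rfl, by simp⟩
  | (k + 2) =>
      intro J hJ M hM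
      set I := J.map (MvPolynomial.C : R →+* MvPolynomial (Fin 2) R) with hIdef
      have hJ2 : (J ^ 2) ^ (k + 1) = ⊥ := by
        rw [← pow_mul]
        have hle : J ^ (2 * (k + 1)) ≤ J ^ (k + 2) := Ideal.pow_le_pow_right (by omega)
        rw [hJ] at hle
        exact le_bot_iff.mp hle
      set φ : MvPolynomial (Fin 2) R →ₐ[R] MvPolynomial (Fin 2) R :=
        MvPolynomial.aeval ![MvPolynomial.X 0, MvPolynomial.X 1 + M] with hφdef
      set ψ : MvPolynomial (Fin 2) R →ₐ[R] MvPolynomial (Fin 2) R :=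
        MvPolynomial.aeval ![MvPolynomial.X 0, MvPolynomial.X 1 + (-M)] with hψdef
      have hφ0 : φ (MvPolynomial.X 0) = MvPolynomial.X 0 := by rw [hφdef]; simp
      have hφ1 : φ (MvPolynomial.X 1) = MvPolynomial.X 1 + M := by rw [hφdef]; simp
      have hψ0 : ψ (MvPolynomial.X 0) = MvPolynomial.X 0 := by rw [hψdef]; simp
      have hψ1 : ψ (MvPolynomial.X 1) = MvPolynomial.X 1 + (-M) := by rw [hψdef]; simp
      have hspan : Ideal.span {M} ≤ I := by
        rw [Ideal.span_le]
        simpa using hM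
      have hspan' : Ideal.span {-M} ≤ I := by
        rw [Ideal.span_le]
        simpa using neg_mem hM
      have hφmem : ∀ z, φ z - z ∈ I := fun z => hspan (aux_shift_sub_mem M φ hφdef z)
      have hψmem : ∀ z, ψ z - z ∈ I := fun z => hspan' (aux_shift_sub_mem (-M) ψ hψdef z)
      have hE1 : ψ M - M ∈ I ^ 2 := aux_sq J ψ hψmem M hM
      have hE2 : M - φ M ∈ I ^ 2 := by
        have h := aux_sq J φ hφmem M hM
        have : M - φ M = -(φ M - M) := by ring
        rw [this]
        exact neg_mem h
      have hpow : I ^ 2 = (J ^ 2).map (MvPolynomial.C : R →+* MvPolynomial (Fin 2) R) :=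
        (Ideal.map_pow _ _ 2).symm
      rw [hpow] at hE1 hE2
      obtain ⟨τ₂, hτ₂0, hτ₂1⟩ := ih (k + 1) (by omega) (J ^ 2) hJ2 (ψ M - M) hE1
      obtain ⟨τ₃, hτ₃0, hτ₃1⟩ := ih (k + 1) (by omega) (J ^ 2) hJ2 (M - φ M) hE2
      have hψφ : ψ.comp φ = τ₂.toAlgHom := by
        apply MvPolynomial.algHom_ext
        intro i
        fin_cases i <;>
          simp only [Fin.zero_eta, Fin.mk_one, Fin.isValue, AlgHom.coe_comp,
            Function.comp_apply, AlgEquiv.toAlgHom_eq_coe, AlgHom.coe_coe]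
        · rw [hφ0, hψ0, AlgEquiv.coe_toAlgHom, hτ₂0]
        · rw [hφ1, map_add, hψ1, AlgEquiv.coe_toAlgHom, hτ₂1]
          ring
      have hφψ : φ.comp ψ = τ₃.toAlgHom := by
        apply MvPolynomial.algHom_ext
        intro i
        fin_cases i <;>
          simp only [Fin.zero_eta, Fin.mk_one, Fin.isValue, AlgHom.coe_comp,
            Function.comp_apply, AlgEquiv.toAlgHom_eq_coe, AlgHom.coe_coe]
        · rw [hψ0, hφ0, AlgEquiv.coe_toAlgHom, hτ₃0]
        · rw [hψ1, map_add, hφ1, map_neg, AlgEquiv.coe_toAlgHom, hτ₃1]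
          ring
      have hsymm₂ : τ₂.symm.toAlgHom.comp τ₂.toAlgHom
          = AlgHom.id R (MvPolynomial (Fin 2) R) := by
        apply MvPolynomial.algHom_ext
        intro i
        simp
      have hsymm₃ : τ₃.toAlgHom.comp τ₃.symm.toAlgHom
          = AlgHom.id R (MvPolynomial (Fin 2) R) := by
        apply MvPolynomial.algHom_ext
        intro i
        simp
      set L : MvPolynomial (Fin 2) R →ₐ[R] MvPolynomial (Fin 2) R :=
        τ₂.symm.toAlgHom.comp ψ with hLdef
      set ρ : MvPolynomial (Fin 2) R →ₐ[R] MvPolynomial (Fin 2) R :=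
        ψ.comp τ₃.symm.toAlgHom with hρdef
      have hL : L.comp φ = AlgHom.id R (MvPolynomial (Fin 2) R) := by
        rw [hLdef, AlgHom.comp_assoc, hψφ, hsymm₂]
      have hφρ : φ.comp ρ = AlgHom.id R (MvPolynomial (Fin 2) R) := by
        rw [hρdef, ← AlgHom.comp_assoc, hφψ, hsymm₃]
      have hLρ : L = ρ := by
        have h' : (L.comp φ).comp ρ = ρ := by rw [hL, AlgHom.id_comp]
        rwa [AlgHom.comp_assoc, hφρ, AlgHom.comp_id] at h'
      have hρφ : ρ.comp φ = AlgHom.id R (MvPolynomial (Fin 2) R) := by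
        rw [← hLρ]; exact hL
      refine ⟨AlgEquiv.ofAlgHom φ ρ hφρ hρφ, ?_, ?_⟩
      · exact hφ0
      · exact hφ1


end Aux

/-- If `F` is a coordinate of `R[x,y]` and `N` is nilpotent then `F + N` is a coordinate. -/
theorem coordinate_add_nilpotent (R : Type*) [CommRing R]
    (F N : MvPolynomial (Fin 2) R)
    (hF : ∃ σ : MvPolynomial (Fin 2) R ≃ₐ[R] MvPolynomial (Fin 2) R,
      σ (MvPolynomial.X 1) = F)
    (hN : N ∈ nilradical (MvPolynomial (Fin 2) R)) :
    ∃ σ : MvPolynomial (Fin 2) R ≃ₐ[R] MvPolynomial (Fin 2) R,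
      σ (MvPolynomial.X 1) = F + N := by
  classical
  obtain ⟨σ, hσ⟩ := hF
  rw [mem_nilradical] at hN
  set M : MvPolynomial (Fin 2) R := σ.symm N with hMdef
  have hMnil : IsNilpotent M :=
    hN.map (σ.symm : MvPolynomial (Fin 2) R →+* MvPolynomial (Fin 2) R)
  set s : Finset R := M.support.image fun m => MvPolynomial.coeff m M with hsdef
  set J : Ideal R := Ideal.span ↑s with hJdef
  have hJfg : J.FG := ⟨s, rfl⟩
  have hle : J ≤ Ideal.radical ⊥ := by
    rw [hJdef, Ideal.span_le]
    intro r hr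
    simp only [hsdef, Finset.coe_image, Set.mem_image, Finset.mem_coe] at hr
    obtain ⟨m, _, rfl⟩ := hr
    obtain ⟨n, hn⟩ := aux_coeff_isNilpotent 2 M hMnil m
    exact ⟨n, by simp [hn]⟩
  obtain ⟨n, hn⟩ := Ideal.exists_pow_le_of_le_radical_of_fg hle hJfg
  have hJn : J ^ n = ⊥ := le_bot_iff.mp hn
  have hMmem : M ∈ J.map (MvPolynomial.C : R →+* MvPolynomial (Fin 2) R) := by
    apply aux_mem_map_C
    intro m
    by_cases hm : m ∈ M.support
    · exact Ideal.subset_span (by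
        simp only [hsdef, Finset.coe_image, Set.mem_image, Finset.mem_coe]
        exact ⟨m, hm, rfl⟩)
    · rw [MvPolynomial.notMem_support_iff.mp hm]
      exact Ideal.zero_mem J
  obtain ⟨τ, hτ0, hτ1⟩ := aux_key n J hJn M hMmem
  refine ⟨τ.trans σ, ?_⟩
  rw [AlgEquiv.trans_apply, hτ1, map_add, hσ, hMdef, AlgEquiv.apply_symm_apply]
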